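/- Let λ be a distribution with finite support on states of nature with n actions and all payoffs in [−1,1], let OPT be the maximum expected sender utility over incentive-compatible direct schemes, and let ε > 0. Then there exists an incentive-compatible direct scheme φ̂ with expected sender utility at least OPT − ε/2 such that every signal σ_i of φ̂ is either large, meaning Σ_θ λ_θ φ̂(θ,σ_i) ≥ ε/(4n), or honest, meaning φ̂(θ,σ_i) > 0 only for states θ with r_i(θ) = max_j r_j(θ). -/

import Mathlib

open Finset

namespace Persuasion

variable {Θ : Type*} [Fintype Θ] {n : ℕ}

/-- `μ` is a probability distribution on the finite type `Θ`. -/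
def IsDist (μ : Θ → ℝ) : Prop := (∀ θ, 0 ≤ μ θ) ∧ ∑ θ, μ θ = 1

/-- a direct signaling scheme: a probability distribution over the `n` signals
(signal `i` recommending action `i`) for each state -/
def IsScheme (φ : Θ → Fin n → ℝ) : Prop :=
  (∀ θ i, 0 ≤ φ θ i) ∧ ∀ θ, ∑ i, φ θ i = 1

/-- `ε`-incentive compatibility of a direct scheme for the distribution `μ`
(`ε = 0` gives exact incentive compatibility) -/
def EIC (μ : Θ → ℝ) (r : Θ → Fin n → ℝ) (ε : ℝ) (φ : Θ → Fin n → ℝ) : Prop :=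
  ∀ i j : Fin n,
    ∑ θ, μ θ * φ θ i * (r θ j - ε) ≤ ∑ θ, μ θ * φ θ i * r θ i

/-- expected sender utility of a direct scheme under `μ`, assuming the receiver
follows the recommendations -/
def senderUtil (μ : Θ → ℝ) (s : Θ → Fin n → ℝ) (φ : Θ → Fin n → ℝ) : ℝ :=
  ∑ θ, ∑ i, μ θ * φ θ i * s θ i

end Persuasion

open Persuasion

/-- for any finite persuasion instance with payoffs in `[−1,1]` and
any `ε > 0`, there is an incentive-compatible direct scheme with expected sender
utility at least `OPT − ε/2` each of whose signals is either *large* (sent with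
probability at least `ε/(4n)`) or *honest* (sent only in states where the recommended
action maximizes the receiver's payoff). -/
theorem large_or_honest_near_optimal_scheme
    {Θ : Type*} [Fintype Θ] {n : ℕ}
    (lam : Θ → ℝ) (hlam : IsDist lam)
    (s r : Θ → Fin n → ℝ)
    (hs : ∀ θ i, s θ i ∈ Set.Icc (-1 : ℝ) 1) (hr : ∀ θ i, r θ i ∈ Set.Icc (-1 : ℝ) 1)
    (ε : ℝ) (hε : 0 < ε)
    (OPT : ℝ)
    (hOPT : IsGreatest {u : ℝ | ∃ φ : Θ → Fin n → ℝ,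
      IsScheme φ ∧ EIC lam r 0 φ ∧ u = senderUtil lam s φ} OPT) :
    ∃ φ : Θ → Fin n → ℝ, IsScheme φ ∧ EIC lam r 0 φ ∧
      OPT - ε / 2 ≤ senderUtil lam s φ ∧
      ∀ i : Fin n,
        (ε / (4 * n) ≤ ∑ θ, lam θ * φ θ i) ∨
        (∀ θ, 0 < φ θ i → ∀ j, r θ j ≤ r θ i) := by
  classical
  obtain ⟨φ, hφS, hφIC, hφU⟩ := hOPT.1
  by_cases hΘ : IsEmpty Θ
  · refine ⟨φ, hφS, hφIC, ?_, ?_⟩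
    · have : senderUtil lam s φ = 0 := by
        simp [senderUtil, Finset.univ_eq_empty]
      rw [hφU, this]; linarith
    · intro i; right; intro θ; exact absurd (hΘ.false θ) (by simp)
  · have hne : Nonempty Θ := not_isEmpty_iff.mp hΘ
    obtain ⟨θ0⟩ := hne
    have hn : 0 < n := by
      by_contra h
      have hn0 : n = 0 := by omega
      have := hφS.2 θ0
      subst hn0
      simp at this
    have hnR : (0:ℝ) < n := by exact_mod_cast hn
    have hεn : 0 < ε / (4 * n) := by positivity
    -- receiver-optimal action in each state
    have hjs : ∀ θ, ∃ j : Fin n, ∀ k, r θ k ≤ r θ j := by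
      intro θ
      obtain ⟨b, _, hb⟩ := Finset.exists_max_image Finset.univ (r θ)
        ⟨⟨0, hn⟩, Finset.mem_univ _⟩
      exact ⟨b, fun k => hb k (Finset.mem_univ _)⟩
    choose jstar hjstar using hjs
    set mass : Fin n → ℝ := fun i => ∑ θ, lam θ * φ θ i with hmass
    set S : Finset (Fin n) := Finset.univ.filter (fun i => mass i < ε / (4 * n)) with hSdef
    set m : Θ → ℝ := fun θ => ∑ k ∈ S, φ θ k with hmdef
    have hmnn : ∀ θ, 0 ≤ m θ := fun θ => Finset.sum_nonneg fun k _ => hφS.1 θ k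
    have hmle : ∀ θ, m θ ≤ ∑ i, φ θ i :=
      fun θ => Finset.sum_le_sum_of_subset_of_nonneg (Finset.subset_univ S)
        (fun k _ _ => hφS.1 θ k)
    set ψ : Θ → Fin n → ℝ := fun θ i =>
      (if i ∈ S then 0 else φ θ i) + (if i = jstar θ then m θ else 0) with hψdef
    have hψnn : ∀ θ i, 0 ≤ ψ θ i := by
      intro θ i
      have h1 := hφS.1 θ i
      have h2 := hmnn θ
      simp only [hψdef]
      split_ifs <;> linarith
    -- ψ is a scheme
    have hψS : IsScheme ψ := by
      refine ⟨hψnn, fun θ => ?_⟩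
      simp only [hψdef]
      rw [Finset.sum_add_distrib]
      have h1 : ∑ i, (if i ∈ S then 0 else φ θ i) = (∑ i, φ θ i) - m θ := by
        have key : ∀ i : Fin n, (if i ∈ S then 0 else φ θ i) =
            φ θ i - (if i ∈ S then φ θ i else 0) := by
          intro i; split_ifs <;> ring
        rw [Finset.sum_congr rfl fun i _ => key i, Finset.sum_sub_distrib,
          Finset.sum_ite_mem, Finset.univ_inter, hmdef]
      have h2 : ∑ i, (if i = jstar θ then m θ else 0) = m θ := by
        simp [Finset.sum_ite_eq']
      rw [h1, h2, hφS.2 θ]; ring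
    -- expansion of signal-wise sums
    have expand : ∀ (i : Fin n) (x : Θ → ℝ),
        ∑ θ, lam θ * ψ θ i * x θ =
          (∑ θ, lam θ * (if i ∈ S then 0 else φ θ i) * x θ) +
          ∑ θ, (if i = jstar θ then lam θ * m θ * x θ else 0) := by
      intro i x
      rw [← Finset.sum_add_distrib]
      refine Finset.sum_congr rfl fun θ _ => ?_
      simp only [hψdef]
      split_ifs <;> ring
    -- ψ is IC
    have hψIC : EIC lam r 0 ψ := by
      intro i j
      simp only [sub_zero]
      rw [expand i (fun θ => r θ j), expand i (fun θ => r θ i)]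
      gcongr ?_ + ?_
      · by_cases hi : i ∈ S
        · simp [hi]
        · simp only [if_neg hi]
          have := hφIC i j
          simpa using this
      · refine Finset.sum_le_sum fun θ _ => ?_
        by_cases h : i = jstar θ
        · simp only [if_pos h]
          have hx : r θ j ≤ r θ i := h ▸ hjstar θ j
          have : 0 ≤ lam θ * m θ := mul_nonneg (hlam.1 θ) (hmnn θ)
          nlinarith
        · simp [h]
    -- the total small mass D
    set D : ℝ := ∑ i ∈ S, mass i with hDdef
    have hDnn : 0 ≤ D :=
      Finset.sum_nonneg fun i _ => Finset.sum_nonneg fun θ _ =>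
        mul_nonneg (hlam.1 θ) (hφS.1 θ i)
    have hDle : D ≤ ε / 4 := by
      have h1 : D ≤ S.card • (ε / (4 * n)) := by
        refine Finset.sum_le_card_nsmul S mass (ε / (4 * n)) fun i hi => ?_
        exact le_of_lt (Finset.mem_filter.mp hi).2
      have h2 : (S.card : ℝ) ≤ n := by
        have := Finset.card_le_univ S
        simp only [Finset.card_univ, Fintype.card_fin] at this
        exact_mod_cast this
      calc D ≤ (S.card : ℝ) * (ε / (4 * n)) := by simpa [nsmul_eq_mul] using h1
        _ ≤ (n : ℝ) * (ε / (4 * n)) := by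
            exact mul_le_mul_of_nonneg_right h2 (le_of_lt hεn)
        _ = ε / 4 := by field_simp
    have hDswap : ∑ θ, lam θ * m θ = D := by
      rw [hDdef, hmass, hmdef]
      simp only []
      rw [Finset.sum_comm]
      refine Finset.sum_congr rfl fun θ _ => ?_
      rw [Finset.mul_sum]
    -- sender utility bound
    have hU : OPT - ε / 2 ≤ senderUtil lam s ψ := by
      have hexp : senderUtil lam s ψ =
          (∑ θ, ∑ i, lam θ * (if i ∈ S then 0 else φ θ i) * s θ i) +
          ∑ θ, lam θ * m θ * s θ (jstar θ) := by
        unfold senderUtil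
        rw [← Finset.sum_add_distrib]
        refine Finset.sum_congr rfl fun θ _ => ?_
        have h2 : ∀ i : Fin n, lam θ * ψ θ i * s θ i =
            lam θ * (if i ∈ S then 0 else φ θ i) * s θ i +
            (if i = jstar θ then lam θ * m θ * s θ i else 0) := by
          intro i; simp only [hψdef]; split_ifs <;> ring
        rw [Finset.sum_congr rfl fun i _ => h2 i, Finset.sum_add_distrib]
        congr 1
        simp [Finset.sum_ite_eq']
      have hA : senderUtil lam s φ -
          (∑ θ, ∑ i, lam θ * (if i ∈ S then 0 else φ θ i) * s θ i) ≤ D := by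
        unfold senderUtil
        rw [← Finset.sum_sub_distrib]
        have : ∀ θ, (∑ i, lam θ * φ θ i * s θ i) -
            (∑ i, lam θ * (if i ∈ S then 0 else φ θ i) * s θ i) =
            ∑ i, (if i ∈ S then lam θ * φ θ i * s θ i else 0) := by
          intro θ
          rw [← Finset.sum_sub_distrib]
          refine Finset.sum_congr rfl fun i _ => ?_
          split_ifs <;> ring
        rw [Finset.sum_congr rfl fun θ _ => this θ]
        rw [Finset.sum_comm]
        have pull : ∀ i : Fin n, ∑ θ, (if i ∈ S then lam θ * φ θ i * s θ i else 0) =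
            if i ∈ S then ∑ θ, lam θ * φ θ i * s θ i else 0 := by
          intro i; split_ifs <;> simp
        rw [Finset.sum_congr rfl fun i _ => pull i, Finset.sum_ite_mem,
          Finset.univ_inter, hDdef]
        refine Finset.sum_le_sum fun i _ => ?_
        refine Finset.sum_le_sum fun θ _ => ?_
        have h1 : 0 ≤ lam θ * φ θ i := mul_nonneg (hlam.1 θ) (hφS.1 θ i)
        have h2 := (hs θ i).2
        nlinarith
      have hB : -D ≤ ∑ θ, lam θ * m θ * s θ (jstar θ) := by
        rw [← hDswap, ← Finset.sum_neg_distrib]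
        refine Finset.sum_le_sum fun θ _ => ?_
        have h1 : 0 ≤ lam θ * m θ := mul_nonneg (hlam.1 θ) (hmnn θ)
        have h2 := (hs θ (jstar θ)).1
        nlinarith
      rw [hexp, hφU] at *
      linarith
    refine ⟨ψ, hψS, hψIC, hU, fun i => ?_⟩
    by_cases hi : i ∈ S
    · right
      intro θ hpos j
      have : ψ θ i = (if i = jstar θ then m θ else 0) := by
        simp [hψdef, hi]
      rw [this] at hpos
      by_cases h : i = jstar θ
      · exact h ▸ hjstar θ j
      · simp [h] at hpos
    · left
      have h1 : mass i ≥ ε / (4 * n) := by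
        by_contra h
        exact hi (Finset.mem_filter.mpr ⟨Finset.mem_univ i, by linarith⟩)
      have h2 : mass i ≤ ∑ θ, lam θ * ψ θ i := by
        refine Finset.sum_le_sum fun θ _ => ?_
        have : φ θ i ≤ ψ θ i := by
          simp only [hψdef, if_neg hi]
          split_ifs with h
          · linarith [hmnn θ]
          · simp
        exact mul_le_mul_of_nonneg_left this (hlam.1 θ)
      linarith
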